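/- arXiv:1706.08880 — 7 statements merged into one kernel-verified Lean document; each statement's English description precedes it below -/
import Mathlib

section
/- Strict-inequality propagation for the infimum operator (Step 1 of the key lemma): let T > 0, n ≥ 1, 𝒱 a convex cone of ℝⁿ, V : [0,T]×ℝⁿ → ℝ bounded, and χ : [0,T]×𝒱 → ℝ bounded below and satisfying χ(t,η₁+η₂) ≤ χ(t,η₁)+χ(t,η₂)−h(t) for all t ∈ [0,T] and η₁,η₂ ∈ 𝒱, where h(t) > 0. Fix (t₀,x₀) ∈ [0,T]×ℝⁿ and 0 < α < h(t₀). Then there exists η₀ ∈ 𝒱 such that V(t₀,x₀+η₀) + χ(t₀,η₀) ≤ H^χ_inf V(t₀,x₀) + α and H^χ_inf V(t₀,x₀+η₀) ≥ V(t₀,x₀+η₀) + h(t₀) − α; in particular H^χ_inf V(t₀,x₀+η₀) > V(t₀,x₀+η₀). -/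
open Set

noncomputable section

/-- The nonlocal infimum operator `H^χ_inf W(t,x) = inf_{η ∈ 𝒱} [W(t, x+η) + χ(t,η)]`. -/
def Hinf {n : ℕ} (V : Set (EuclideanSpace ℝ (Fin n)))
    (χ : ℝ → EuclideanSpace ℝ (Fin n) → ℝ)
    (W : ℝ → EuclideanSpace ℝ (Fin n) → ℝ) (t : ℝ) (x : EuclideanSpace ℝ (Fin n)) : ℝ :=
  sInf ((fun η => W t (x + η) + χ t η) '' V)

/-- **Strict-inequality propagation for the infimum operator (Step 1 of the key lemma).**
If `χ(t, η₁+η₂) ≤ χ(t,η₁) + χ(t,η₂) − h(t)` with `h(t₀) > 0` and `0 < α < h(t₀)`, then there is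
`η₀ ∈ 𝒱` which is `α`-optimal for `H^χ_inf V(t₀,x₀)` and satisfies
`H^χ_inf V(t₀, x₀+η₀) ≥ V(t₀, x₀+η₀) + h(t₀) − α > V(t₀, x₀+η₀)`. -/
theorem Hinf_strict_propagation {n : ℕ} (hn : 1 ≤ n) (T : ℝ) (hT : 0 < T)
    (𝒱 : ConvexCone ℝ (EuclideanSpace ℝ (Fin n)))
    (h𝒱 : (𝒱 : Set (EuclideanSpace ℝ (Fin n))).Nonempty)
    (V : ℝ → EuclideanSpace ℝ (Fin n) → ℝ)
    (hVbdd : ∃ M : ℝ, ∀ t ∈ Icc (0 : ℝ) T, ∀ x : EuclideanSpace ℝ (Fin n), |V t x| ≤ M)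
    (χ : ℝ → EuclideanSpace ℝ (Fin n) → ℝ)
    (hχlb : ∃ m : ℝ, ∀ t ∈ Icc (0 : ℝ) T, ∀ η ∈ 𝒱, m ≤ χ t η)
    (h : ℝ → ℝ) (hpos : ∀ t ∈ Icc (0 : ℝ) T, 0 < h t)
    (hgap : ∀ t ∈ Icc (0 : ℝ) T, ∀ η₁ ∈ 𝒱, ∀ η₂ ∈ 𝒱,
        χ t (η₁ + η₂) ≤ χ t η₁ + χ t η₂ - h t)
    (t₀ : ℝ) (ht₀ : t₀ ∈ Icc (0 : ℝ) T) (x₀ : EuclideanSpace ℝ (Fin n))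
    (α : ℝ) (hα : 0 < α) (hαh : α < h t₀) :
    ∃ η₀ ∈ 𝒱,
      V t₀ (x₀ + η₀) + χ t₀ η₀ ≤ Hinf (𝒱 : Set (EuclideanSpace ℝ (Fin n))) χ V t₀ x₀ + α ∧
      V t₀ (x₀ + η₀) + h t₀ - α ≤
        Hinf (𝒱 : Set (EuclideanSpace ℝ (Fin n))) χ V t₀ (x₀ + η₀) ∧
      V t₀ (x₀ + η₀) < Hinf (𝒱 : Set (EuclideanSpace ℝ (Fin n))) χ V t₀ (x₀ + η₀) := by
  obtain ⟨m, hm⟩ := hχlb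
  obtain ⟨M, hM⟩ := hVbdd
  set S : Set ℝ := (fun η => V t₀ (x₀ + η) + χ t₀ η) '' 𝒱 with hS
  have hSne : S.Nonempty := h𝒱.image _
  have hSbdd : BddBelow S := by
    refine ⟨-M + m, ?_⟩
    rintro c ⟨η', hη', rfl⟩
    obtain ⟨hV1, hV2⟩ := abs_le.mp (hM t₀ ht₀ (x₀ + η'))
    have := hm t₀ ht₀ η' hη'
    dsimp only
    linarith
  obtain ⟨a, ⟨η₀, hη₀, rfl⟩, ha⟩ := Real.lt_sInf_add_pos hSne hα
  replace ha : V t₀ (x₀ + η₀) + χ t₀ η₀ < sInf S + α := ha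
  have key : V t₀ (x₀ + η₀) + h t₀ - α ≤
      Hinf (𝒱 : Set (EuclideanSpace ℝ (Fin n))) χ V t₀ (x₀ + η₀) := by
    apply le_csInf (h𝒱.image _)
    rintro b ⟨η, hη, rfl⟩
    have hadd : η₀ + η ∈ 𝒱 := 𝒱.add_mem hη₀ hη
    have h1 : sInf S ≤ V t₀ (x₀ + (η₀ + η)) + χ t₀ (η₀ + η) :=
      csInf_le hSbdd ⟨η₀ + η, hadd, rfl⟩
    have h2 := hgap t₀ ht₀ η₀ hη₀ η hη
    have h3 : x₀ + (η₀ + η) = x₀ + η₀ + η := by rw [add_assoc]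
    rw [h3] at h1
    dsimp only
    linarith
  exact ⟨η₀, hη₀, le_of_lt ha, key, by linarith⟩
end
end

section
/- Strict-inequality propagation for the supremum operator (Step 2 of the key lemma): let T > 0, n ≥ 1, 𝒰 a convex cone of ℝⁿ, U : [0,T]×ℝⁿ → ℝ bounded, and c : [0,T]×𝒰 → ℝ bounded below and satisfying c(t,ξ₁+ξ₂) ≤ c(t,ξ₁)+c(t,ξ₂)−h(t) for all t ∈ [0,T] and ξ₁,ξ₂ ∈ 𝒰, where h(t) > 0. Fix (t₀,x₀) ∈ [0,T]×ℝⁿ and 0 < α < h(t₀). Then there exists ξ₀ ∈ 𝒰 such that U(t₀,x₀+ξ₀) − c(t₀,ξ₀) ≥ H^c_sup U(t₀,x₀) − α and H^c_sup U(t₀,x₀+ξ₀) ≤ U(t₀,x₀+ξ₀) − h(t₀) + α; in particular H^c_sup U(t₀,x₀+ξ₀) < U(t₀,x₀+ξ₀). -/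
open Set

noncomputable section

/-- The nonlocal supremum operator `H^c_sup W(t,x) = sup_{ξ ∈ 𝒰} [W(t, x+ξ) − c(t,ξ)]`. -/
def Hsup {n : ℕ} (U : Set (EuclideanSpace ℝ (Fin n)))
    (c : ℝ → EuclideanSpace ℝ (Fin n) → ℝ)
    (W : ℝ → EuclideanSpace ℝ (Fin n) → ℝ) (t : ℝ) (x : EuclideanSpace ℝ (Fin n)) : ℝ :=
  sSup ((fun ξ => W t (x + ξ) - c t ξ) '' U)

/-- **Strict-inequality propagation for the supremum operator (Step 2 of the key lemma).**
If `c(t, ξ₁+ξ₂) ≤ c(t,ξ₁) + c(t,ξ₂) − h(t)` with `h(t₀) > 0` and `0 < α < h(t₀)`, then there is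
`ξ₀ ∈ 𝒰` which is `α`-optimal for `H^c_sup U(t₀,x₀)` and satisfies
`H^c_sup U(t₀, x₀+ξ₀) ≤ U(t₀, x₀+ξ₀) − h(t₀) + α < U(t₀, x₀+ξ₀)`. -/
theorem Hsup_strict_propagation {n : ℕ} (hn : 1 ≤ n) (T : ℝ) (hT : 0 < T)
    (𝒰 : ConvexCone ℝ (EuclideanSpace ℝ (Fin n)))
    (h𝒰 : (𝒰 : Set (EuclideanSpace ℝ (Fin n))).Nonempty)
    (U : ℝ → EuclideanSpace ℝ (Fin n) → ℝ)
    (hUbdd : ∃ M : ℝ, ∀ t ∈ Icc (0 : ℝ) T, ∀ x : EuclideanSpace ℝ (Fin n), |U t x| ≤ M)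
    (c : ℝ → EuclideanSpace ℝ (Fin n) → ℝ)
    (hclb : ∃ m : ℝ, ∀ t ∈ Icc (0 : ℝ) T, ∀ ξ ∈ 𝒰, m ≤ c t ξ)
    (h : ℝ → ℝ) (hpos : ∀ t ∈ Icc (0 : ℝ) T, 0 < h t)
    (hgap : ∀ t ∈ Icc (0 : ℝ) T, ∀ ξ₁ ∈ 𝒰, ∀ ξ₂ ∈ 𝒰,
        c t (ξ₁ + ξ₂) ≤ c t ξ₁ + c t ξ₂ - h t)
    (t₀ : ℝ) (ht₀ : t₀ ∈ Icc (0 : ℝ) T) (x₀ : EuclideanSpace ℝ (Fin n))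
    (α : ℝ) (hα : 0 < α) (hαh : α < h t₀) :
    ∃ ξ₀ ∈ 𝒰,
      Hsup (𝒰 : Set (EuclideanSpace ℝ (Fin n))) c U t₀ x₀ - α ≤
        U t₀ (x₀ + ξ₀) - c t₀ ξ₀ ∧
      Hsup (𝒰 : Set (EuclideanSpace ℝ (Fin n))) c U t₀ (x₀ + ξ₀) ≤
        U t₀ (x₀ + ξ₀) - h t₀ + α ∧
      Hsup (𝒰 : Set (EuclideanSpace ℝ (Fin n))) c U t₀ (x₀ + ξ₀) < U t₀ (x₀ + ξ₀) := by

  obtain ⟨M, hM⟩ := hUbdd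
  obtain ⟨m, hm⟩ := hclb
  -- boundedness above of the image sets
  have hbdd : ∀ y : EuclideanSpace ℝ (Fin n),
      BddAbove ((fun ξ => U t₀ (y + ξ) - c t₀ ξ) '' (𝒰 : Set (EuclideanSpace ℝ (Fin n)))) := by
    intro y
    refine ⟨M - m, ?_⟩
    rintro r ⟨ξ, hξ, rfl⟩
    dsimp only
    have h1 : U t₀ (y + ξ) ≤ M := (abs_le.mp (hM t₀ ht₀ _)).2
    have h2 : m ≤ c t₀ ξ := hm t₀ ht₀ ξ hξ
    linarith
  have hne : ∀ y : EuclideanSpace ℝ (Fin n),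
      ((fun ξ => U t₀ (y + ξ) - c t₀ ξ) '' (𝒰 : Set (EuclideanSpace ℝ (Fin n)))).Nonempty :=
    fun y => h𝒰.image _
  -- pick α-optimal ξ₀
  have hlt : Hsup (𝒰 : Set (EuclideanSpace ℝ (Fin n))) c U t₀ x₀ - α <
      sSup ((fun ξ => U t₀ (x₀ + ξ) - c t₀ ξ) '' (𝒰 : Set (EuclideanSpace ℝ (Fin n)))) := by
    unfold Hsup; linarith
  obtain ⟨r, hrmem, hr⟩ := exists_lt_of_lt_csSup (hne x₀) hlt
  obtain ⟨ξ₀, hξ₀, rfl⟩ := hrmem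
  dsimp only at hr
  refine ⟨ξ₀, hξ₀, le_of_lt hr, ?_, ?_⟩
  · -- the key bound
    unfold Hsup
    apply csSup_le (hne _)
    rintro r ⟨ξ, hξ, rfl⟩
    have hsum : ξ₀ + ξ ∈ 𝒰 := 𝒰.add_mem hξ₀ hξ
    have hle : U t₀ (x₀ + (ξ₀ + ξ)) - c t₀ (ξ₀ + ξ) ≤
        Hsup (𝒰 : Set (EuclideanSpace ℝ (Fin n))) c U t₀ x₀ := by
      unfold Hsup
      exact le_csSup (hbdd x₀) ⟨ξ₀ + ξ, hsum, rfl⟩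
    have hc : c t₀ (ξ₀ + ξ) ≤ c t₀ ξ₀ + c t₀ ξ - h t₀ := hgap t₀ ht₀ ξ₀ hξ₀ ξ hξ
    have heq : x₀ + ξ₀ + ξ = x₀ + (ξ₀ + ξ) := add_assoc _ _ _
    dsimp only
    rw [heq]
    have := hr.le
    linarith
  · have hhsup : Hsup (𝒰 : Set (EuclideanSpace ℝ (Fin n))) c U t₀ (x₀ + ξ₀) ≤
        U t₀ (x₀ + ξ₀) - h t₀ + α := by
      unfold Hsup
      apply csSup_le (hne _)
      rintro r ⟨ξ, hξ, rfl⟩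
      have hsum : ξ₀ + ξ ∈ 𝒰 := 𝒰.add_mem hξ₀ hξ
      have hle : U t₀ (x₀ + (ξ₀ + ξ)) - c t₀ (ξ₀ + ξ) ≤
          Hsup (𝒰 : Set (EuclideanSpace ℝ (Fin n))) c U t₀ x₀ := by
        unfold Hsup
        exact le_csSup (hbdd x₀) ⟨ξ₀ + ξ, hsum, rfl⟩
      have hc : c t₀ (ξ₀ + ξ) ≤ c t₀ ξ₀ + c t₀ ξ - h t₀ := hgap t₀ ht₀ ξ₀ hξ₀ ξ hξ
      have heq : x₀ + ξ₀ + ξ = x₀ + (ξ₀ + ξ) := add_assoc _ _ _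
      dsimp only
      rw [heq]
      have := hr.le
      linarith
    calc Hsup (𝒰 : Set (EuclideanSpace ℝ (Fin n))) c U t₀ (x₀ + ξ₀)
        ≤ U t₀ (x₀ + ξ₀) - h t₀ + α := hhsup
      _ < U t₀ (x₀ + ξ₀) := by linarith
end
end

section
/- Persistence of strict obstacle inequalities in a neighborhood (Step 3 of the key lemma): let T > 0 and n ≥ 1, let 𝒰 ⊆ 𝒱 be convex cones of ℝⁿ, let U, V : [0,T]×ℝⁿ → ℝ be bounded and uniformly continuous, and let c : [0,T]×𝒰 → ℝ and χ : [0,T]×𝒱 → ℝ be bounded below and uniformly continuous. Suppose that at some (t₀,x̄) ∈ [0,T)×ℝⁿ there exists α > 0 with U(t₀,x̄) ≥ H^c_sup U(t₀,x̄) + α and V(t₀,x̄) ≤ H^χ_inf V(t₀,x̄) − α. Then there exists δ > 0 with t₀ + δ < T such that for every (t,x) ∈ [(t₀−δ)∨0, t₀+δ] × B̄(x̄,δ) one has U(t,x) > H^c_sup U(t,x) and V(t,x) < H^χ_inf V(t,x). -/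
open Set Metric Function

noncomputable section

/-- **Persistence of strict obstacle inequalities in a neighborhood (Step 3 of the key lemma).**
If at `(t₀, xbar) ∈ [0,T)×ℝⁿ` one has `U ≥ H^c_sup U + α` and `V ≤ H^χ_inf V − α` for some `α > 0`,
then there is `δ > 0` with `t₀ + δ < T` such that `U > H^c_sup U` and `V < H^χ_inf V` on
`[(t₀−δ)∨0, t₀+δ] × B̄(xbar, δ)`. -/
theorem strict_obstacle_persistence {n : ℕ} (hn : 1 ≤ n) (T : ℝ) (hT : 0 < T)
    (𝒰 𝒱 : ConvexCone ℝ (EuclideanSpace ℝ (Fin n)))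
    (h𝒰 : (𝒰 : Set (EuclideanSpace ℝ (Fin n))).Nonempty)
    (h𝒱 : (𝒱 : Set (EuclideanSpace ℝ (Fin n))).Nonempty)
    (h𝒰𝒱 : (𝒰 : Set (EuclideanSpace ℝ (Fin n))) ⊆ (𝒱 : Set (EuclideanSpace ℝ (Fin n))))
    (U V : ℝ → EuclideanSpace ℝ (Fin n) → ℝ)
    (hUbdd : ∃ M : ℝ, ∀ t ∈ Icc (0 : ℝ) T, ∀ x : EuclideanSpace ℝ (Fin n), |U t x| ≤ M)
    (hVbdd : ∃ M : ℝ, ∀ t ∈ Icc (0 : ℝ) T, ∀ x : EuclideanSpace ℝ (Fin n), |V t x| ≤ M)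
    (hUuc : UniformContinuousOn (fun p : ℝ × EuclideanSpace ℝ (Fin n) => U p.1 p.2)
      (Icc (0 : ℝ) T ×ˢ univ))
    (hVuc : UniformContinuousOn (fun p : ℝ × EuclideanSpace ℝ (Fin n) => V p.1 p.2)
      (Icc (0 : ℝ) T ×ˢ univ))
    (c χ : ℝ → EuclideanSpace ℝ (Fin n) → ℝ)
    (hclb : ∃ m : ℝ, ∀ t ∈ Icc (0 : ℝ) T, ∀ ξ ∈ 𝒰, m ≤ c t ξ)
    (hχlb : ∃ m : ℝ, ∀ t ∈ Icc (0 : ℝ) T, ∀ η ∈ 𝒱, m ≤ χ t η)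
    (hcuc : UniformContinuousOn (fun p : ℝ × EuclideanSpace ℝ (Fin n) => c p.1 p.2)
      (Icc (0 : ℝ) T ×ˢ (𝒰 : Set (EuclideanSpace ℝ (Fin n)))))
    (hχuc : UniformContinuousOn (fun p : ℝ × EuclideanSpace ℝ (Fin n) => χ p.1 p.2)
      (Icc (0 : ℝ) T ×ˢ (𝒱 : Set (EuclideanSpace ℝ (Fin n)))))
    (t₀ : ℝ) (ht₀ : t₀ ∈ Ico (0 : ℝ) T) (xbar : EuclideanSpace ℝ (Fin n))
    (α : ℝ) (hα : 0 < α)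
    (hU : Hsup (𝒰 : Set (EuclideanSpace ℝ (Fin n))) c U t₀ xbar + α ≤ U t₀ xbar)
    (hV : V t₀ xbar ≤ Hinf (𝒱 : Set (EuclideanSpace ℝ (Fin n))) χ V t₀ xbar - α) :
    ∃ δ > (0 : ℝ), t₀ + δ < T ∧
      ∀ t ∈ Icc (max (t₀ - δ) 0) (t₀ + δ), ∀ x ∈ closedBall xbar δ,
        Hsup (𝒰 : Set (EuclideanSpace ℝ (Fin n))) c U t x < U t x ∧
        V t x < Hinf (𝒱 : Set (EuclideanSpace ℝ (Fin n))) χ V t x := by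

  obtain ⟨MU, hMU⟩ := hUbdd
  obtain ⟨MV, hMV⟩ := hVbdd
  obtain ⟨mc, hmc⟩ := hclb
  obtain ⟨mχ, hmχ⟩ := hχlb
  set ε := α / 4 with hεdef
  have hεpos : 0 < ε := by positivity
  rw [Metric.uniformContinuousOn_iff] at hUuc hVuc hcuc hχuc
  obtain ⟨δ₁, hδ₁, hU1⟩ := hUuc ε hεpos
  obtain ⟨δ₂, hδ₂, hV1⟩ := hVuc ε hεpos
  obtain ⟨δ₃, hδ₃, hc1⟩ := hcuc ε hεpos
  obtain ⟨δ₄, hδ₄, hχ1⟩ := hχuc ε hεpos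
  set δ' := min (min δ₁ δ₂) (min δ₃ δ₄) with hδ'def
  have hδ'pos : 0 < δ' := by
    simp only [hδ'def, lt_min_iff]
    exact ⟨⟨hδ₁, hδ₂⟩, ⟨hδ₃, hδ₄⟩⟩
  set δ := min (δ' / 2) ((T - t₀) / 2) with hδdef
  have hδpos : 0 < δ := by
    have : 0 < T - t₀ := sub_pos.2 ht₀.2
    simp only [hδdef, lt_min_iff]
    constructor <;> linarith
  have hδlt : δ < δ' := lt_of_le_of_lt (min_le_left _ _) (by linarith)
  have ht₀T : t₀ ∈ Icc (0 : ℝ) T := ⟨ht₀.1, le_of_lt ht₀.2⟩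
  have htop : t₀ + δ < T := by
    have : δ ≤ (T - t₀) / 2 := min_le_right _ _
    linarith [ht₀.2]
  refine ⟨δ, hδpos, htop, ?_⟩
  intro t ht x hx
  have htT : t ∈ Icc (0 : ℝ) T := by
    constructor
    · exact le_trans (le_max_right _ _) ht.1
    · exact le_of_lt (lt_of_le_of_lt ht.2 htop)
  have htt₀ : dist t t₀ < δ' := by
    rw [Real.dist_eq, abs_sub_lt_iff]
    have h1 : t₀ - δ ≤ t := le_trans (le_max_left _ _) ht.1
    constructor <;> linarith [ht.2, hδlt]
  have hxx : dist x xbar < δ' := lt_of_le_of_lt (mem_closedBall.1 hx) hδlt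
  -- bounds for Hsup at (t₀, xbar) : bddAbove and each element ≤ Hsup
  have hbddU : ∀ s ∈ Icc (0:ℝ) T, ∀ y : EuclideanSpace ℝ (Fin n),
      BddAbove ((fun ξ => U s (y + ξ) - c s ξ) '' (𝒰 : Set (EuclideanSpace ℝ (Fin n)))) := by
    intro s hs y
    refine ⟨MU - mc, ?_⟩
    rintro _ ⟨ξ, hξ, rfl⟩
    dsimp only
    have h1 := hMU s hs (y + ξ)
    have h2 := hmc s hs ξ hξ
    have := abs_le.1 h1
    linarith [this.2]
  have hbddV : ∀ s ∈ Icc (0:ℝ) T, ∀ y : EuclideanSpace ℝ (Fin n),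
      BddBelow ((fun η => V s (y + η) + χ s η) '' (𝒱 : Set (EuclideanSpace ℝ (Fin n)))) := by
    intro s hs y
    refine ⟨-MV + mχ, ?_⟩
    rintro _ ⟨η, hη, rfl⟩
    dsimp only
    have h1 := hMV s hs (y + η)
    have h2 := hmχ s hs η hη
    have := abs_le.1 h1
    linarith [this.1]
  have hne𝒰 : ((fun ξ => U t (x + ξ) - c t ξ) '' (𝒰 : Set (EuclideanSpace ℝ (Fin n)))).Nonempty :=
    h𝒰.image _
  have hne𝒱 : ((fun η => V t (x + η) + χ t η) '' (𝒱 : Set (EuclideanSpace ℝ (Fin n)))).Nonempty :=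
    h𝒱.image _
  -- uniform closeness of U values
  have hUclose : ∀ y : EuclideanSpace ℝ (Fin n),
      |U t y - U t₀ (xbar + (y - x))| < ε := by
    intro y
    have hmem1 : ((t, y) : ℝ × EuclideanSpace ℝ (Fin n)) ∈ Icc (0:ℝ) T ×ˢ univ :=
      ⟨htT, mem_univ _⟩
    have hmem2 : ((t₀, xbar + (y - x)) : ℝ × EuclideanSpace ℝ (Fin n)) ∈ Icc (0:ℝ) T ×ˢ univ :=
      ⟨ht₀T, mem_univ _⟩
    have hd : dist ((t, y) : ℝ × EuclideanSpace ℝ (Fin n)) (t₀, xbar + (y - x)) < δ₁ := by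
      rw [Prod.dist_eq]
      apply max_lt
      · exact lt_of_lt_of_le htt₀ (le_trans (min_le_left _ _) (min_le_left _ _))
      · have : dist y (xbar + (y - x)) = dist x xbar := by
          rw [dist_eq_norm, dist_eq_norm]
          congr 1
          abel
        rw [this]
        exact lt_of_lt_of_le hxx (le_trans (min_le_left _ _) (min_le_left _ _))
    have := hU1 (t, y) hmem1 (t₀, xbar + (y - x)) hmem2 hd
    rwa [Real.dist_eq] at this
  have hVclose : ∀ y : EuclideanSpace ℝ (Fin n),
      |V t y - V t₀ (xbar + (y - x))| < ε := by
    intro y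
    have hmem1 : ((t, y) : ℝ × EuclideanSpace ℝ (Fin n)) ∈ Icc (0:ℝ) T ×ˢ univ :=
      ⟨htT, mem_univ _⟩
    have hmem2 : ((t₀, xbar + (y - x)) : ℝ × EuclideanSpace ℝ (Fin n)) ∈ Icc (0:ℝ) T ×ˢ univ :=
      ⟨ht₀T, mem_univ _⟩
    have hd : dist ((t, y) : ℝ × EuclideanSpace ℝ (Fin n)) (t₀, xbar + (y - x)) < δ₂ := by
      rw [Prod.dist_eq]
      apply max_lt
      · exact lt_of_lt_of_le htt₀ (le_trans (min_le_left _ _) (min_le_right _ _))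
      · have : dist y (xbar + (y - x)) = dist x xbar := by
          rw [dist_eq_norm, dist_eq_norm]
          congr 1
          abel
        rw [this]
        exact lt_of_lt_of_le hxx (le_trans (min_le_left _ _) (min_le_right _ _))
    have := hV1 (t, y) hmem1 (t₀, xbar + (y - x)) hmem2 hd
    rwa [Real.dist_eq] at this
  have hcclose : ∀ ξ ∈ (𝒰 : Set (EuclideanSpace ℝ (Fin n))), |c t ξ - c t₀ ξ| < ε := by
    intro ξ hξ
    have hd : dist ((t, ξ) : ℝ × EuclideanSpace ℝ (Fin n)) (t₀, ξ) < δ₃ := by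
      rw [Prod.dist_eq]
      apply max_lt
      · exact lt_of_lt_of_le htt₀ (le_trans (min_le_right _ _) (min_le_left _ _))
      · simpa using hδ₃
    have := hc1 (t, ξ) ⟨htT, hξ⟩ (t₀, ξ) ⟨ht₀T, hξ⟩ hd
    rwa [Real.dist_eq] at this
  have hχclose : ∀ η ∈ (𝒱 : Set (EuclideanSpace ℝ (Fin n))), |χ t η - χ t₀ η| < ε := by
    intro η hη
    have hd : dist ((t, η) : ℝ × EuclideanSpace ℝ (Fin n)) (t₀, η) < δ₄ := by
      rw [Prod.dist_eq]
      apply max_lt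
      · exact lt_of_lt_of_le htt₀ (le_trans (min_le_right _ _) (min_le_right _ _))
      · simpa using hδ₄
    have := hχ1 (t, η) ⟨htT, hη⟩ (t₀, η) ⟨ht₀T, hη⟩ hd
    rwa [Real.dist_eq] at this
  constructor
  · -- Hsup at (t,x) < U t x
    have hsup_le : Hsup (𝒰 : Set (EuclideanSpace ℝ (Fin n))) c U t x ≤
        Hsup (𝒰 : Set (EuclideanSpace ℝ (Fin n))) c U t₀ xbar + 2 * ε := by
      apply csSup_le hne𝒰
      rintro _ ⟨ξ, hξ, rfl⟩
      dsimp only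
      have h1 := hUclose (x + ξ)
      have h2 := hcclose ξ hξ
      have hmem : U t₀ (xbar + ξ) - c t₀ ξ ≤
          Hsup (𝒰 : Set (EuclideanSpace ℝ (Fin n))) c U t₀ xbar :=
        le_csSup (hbddU t₀ ht₀T xbar) ⟨ξ, hξ, rfl⟩
      have hxe : xbar + (x + ξ - x) = xbar + ξ := by abel
      rw [hxe] at h1
      have h1' := abs_lt.1 h1
      have h2' := abs_lt.1 h2
      linarith [h1'.2, h2'.1, hmem]
    have hUx : U t₀ xbar - ε < U t x := by
      have := hUclose x
      have hxe : xbar + (x - x) = xbar := by abel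
      rw [hxe] at this
      linarith [(abs_lt.1 this).1]
    have : Hsup (𝒰 : Set (EuclideanSpace ℝ (Fin n))) c U t₀ xbar + 2 * ε <
        U t x := by
      have hα4 : α = 4 * ε := by rw [hεdef]; ring
      linarith [hU]
    linarith
  · -- V t x < Hinf at (t,x)
    have hinf_ge : Hinf (𝒱 : Set (EuclideanSpace ℝ (Fin n))) χ V t₀ xbar - 2 * ε ≤
        Hinf (𝒱 : Set (EuclideanSpace ℝ (Fin n))) χ V t x := by
      apply le_csInf hne𝒱
      rintro _ ⟨η, hη, rfl⟩
      dsimp only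
      have h1 := hVclose (x + η)
      have h2 := hχclose η hη
      have hmem : Hinf (𝒱 : Set (EuclideanSpace ℝ (Fin n))) χ V t₀ xbar ≤
          V t₀ (xbar + η) + χ t₀ η :=
        csInf_le (hbddV t₀ ht₀T xbar) ⟨η, hη, rfl⟩
      have hxe : xbar + (x + η - x) = xbar + η := by abel
      rw [hxe] at h1
      have h1' := abs_lt.1 h1
      have h2' := abs_lt.1 h2
      linarith [h1'.1, h2'.1, hmem]
    have hVx : V t x < V t₀ xbar + ε := by
      have := hVclose x
      have hxe : xbar + (x - x) = xbar := by abel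
      rw [hxe] at this
      linarith [(abs_lt.1 this).2]
    have hα4 : α = 4 * ε := by rw [hεdef]; ring
    linarith [hV]
end
end

section
/- Trace estimate for Lipschitz diffusion coefficients: let n, d ≥ 1, T > 0, and let σ : [0,T]×ℝⁿ → ℝ^{n×d} satisfy ‖σ(t,x) − σ(t,y)‖_F ≤ C₁|x−y| and ‖σ(t,x)‖_F ≤ C₁(1+|x|) for all t ∈ [0,T] and x, y ∈ ℝⁿ, for some constant C₁ > 0. There exists a constant C > 0 depending only on C₁ such that: whenever ε > 0, λ ≥ 0, and X, Y are symmetric n×n matrices with [[X,0],[0,−Y]] ⪯ (2/ε)·[[I,−I],[−I,I]] + λ·I_{2n} in the Loewner order, then for all t ∈ [0,T] and x, y ∈ ℝⁿ: ½ tr( σ(t,x)ᵀ X σ(t,x) − σ(t,y)ᵀ Y σ(t,y) ) ≤ (C/ε)|x−y|² + Cλ(1 + |x|² + |y|²). -/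
open Set Matrix

noncomputable section

/-- Squared Frobenius norm `‖M‖_F² = tr(Mᵀ M)`. -/
def frobNormSq {m k : Type*} [Fintype m] [Fintype k] (M : Matrix m k ℝ) : ℝ :=
  Matrix.trace (Mᵀ * M)

/-- Frobenius norm. -/
def frobNorm {m k : Type*} [Fintype m] [Fintype k] (M : Matrix m k ℝ) : ℝ :=
  Real.sqrt (frobNormSq M)

lemma frobNormSq_eq_sum {m k : Type*} [Fintype m] [Fintype k] (M : Matrix m k ℝ) :
    frobNormSq M = ∑ j, ∑ i, (M i j)^2 := by
  simp [frobNormSq, Matrix.trace, Matrix.mul_apply, Matrix.diag, sq]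

lemma frobNormSq_nonneg {m k : Type*} [Fintype m] [Fintype k] (M : Matrix m k ℝ) :
    0 ≤ frobNormSq M := by
  rw [frobNormSq_eq_sum]; positivity

lemma frobNormSq_le {m k : Type*} [Fintype m] [Fintype k] (M : Matrix m k ℝ) (c : ℝ)
    (hc : 0 ≤ c) (h : frobNorm M ≤ c) : frobNormSq M ≤ c ^ 2 := by
  have h0 := frobNormSq_nonneg M
  have hnn : 0 ≤ frobNorm M := Real.sqrt_nonneg _
  have heq : frobNorm M ^ 2 = frobNormSq M := Real.sq_sqrt h0
  calc frobNormSq M = frobNorm M ^ 2 := heq.symm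
    _ ≤ c ^ 2 := pow_le_pow_left₀ hnn h 2

lemma trace_conj_eq_sum {n d : ℕ} (X : Matrix (Fin n) (Fin n) ℝ) (S : Matrix (Fin n) (Fin d) ℝ) :
    Matrix.trace (Sᵀ * X * S) = ∑ k, (fun i => S i k) ⬝ᵥ X *ᵥ (fun i => S i k) := by
  simp [Matrix.trace, Matrix.mul_apply, dotProduct, Matrix.mulVec, Matrix.diag, Finset.mul_sum, Finset.sum_mul]
  congr 1; ext k
  rw [Finset.sum_comm]
  congr 1; ext i; congr 1; ext j; ring


/-- **Trace estimate for Lipschitz diffusion coefficients.**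
If `σ` is Frobenius–Lipschitz in `x` with constant `C₁` and of linear growth with constant `C₁`,
then there is a constant `C > 0` (depending only on `C₁`) such that whenever
`[[X,0],[0,-Y]] ⪯ (2/ε)[[I,-I],[-I,I]] + λ·I` in the Loewner order one has
`½ tr(σ(t,x)ᵀ X σ(t,x) - σ(t,y)ᵀ Y σ(t,y)) ≤ (C/ε)|x-y|² + Cλ(1+|x|²+|y|²)`. -/
theorem trace_estimate_lipschitz_diffusion (n d : ℕ) (hn : 1 ≤ n) (hd : 1 ≤ d)
    (T : ℝ) (hT : 0 < T) (C₁ : ℝ) (hC₁ : 0 < C₁) :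
    ∃ C > (0 : ℝ),
      ∀ σm : ℝ → EuclideanSpace ℝ (Fin n) → Matrix (Fin n) (Fin d) ℝ,
        (∀ t ∈ Icc (0 : ℝ) T, ∀ x y : EuclideanSpace ℝ (Fin n),
            frobNorm (σm t x - σm t y) ≤ C₁ * ‖x - y‖) →
        (∀ t ∈ Icc (0 : ℝ) T, ∀ x : EuclideanSpace ℝ (Fin n),
            frobNorm (σm t x) ≤ C₁ * (1 + ‖x‖)) →
        ∀ ε > (0 : ℝ), ∀ lam ≥ (0 : ℝ), ∀ X Y : Matrix (Fin n) (Fin n) ℝ,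
          X.IsSymm → Y.IsSymm →
          ((2 / ε) • (Matrix.fromBlocks (1 : Matrix (Fin n) (Fin n) ℝ) (-1) (-1) 1)
            + lam • (1 : Matrix (Fin n ⊕ Fin n) (Fin n ⊕ Fin n) ℝ)
            - Matrix.fromBlocks X 0 0 (-Y)).PosSemidef →
          ∀ t ∈ Icc (0 : ℝ) T, ∀ x y : EuclideanSpace ℝ (Fin n),
            (1 / 2) * (Matrix.trace ((σm t x)ᵀ * X * σm t x)
                - Matrix.trace ((σm t y)ᵀ * Y * σm t y)) ≤
              (C / ε) * ‖x - y‖ ^ 2 + C * lam * (1 + ‖x‖ ^ 2 + ‖y‖ ^ 2) := by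
  refine ⟨2 * C₁ ^ 2, by positivity, ?_⟩
  intro σm hlip hgrow ε hε lam hlam X Y hX hY hpsd t ht x y
  set Sx := σm t x with hSx
  set Sy := σm t y with hSy
  -- pointwise quadratic form inequality for each column
  have key : ∀ k : Fin d,
      (fun i => Sx i k) ⬝ᵥ X *ᵥ (fun i => Sx i k) - (fun i => Sy i k) ⬝ᵥ Y *ᵥ (fun i => Sy i k)
      ≤ (2/ε) * (((fun i => Sx i k) - (fun i => Sy i k)) ⬝ᵥ ((fun i => Sx i k) - (fun i => Sy i k)))
        + lam * ((fun i => Sx i k) ⬝ᵥ (fun i => Sx i k) + (fun i => Sy i k) ⬝ᵥ (fun i => Sy i k)) := by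
    intro k
    set a : Fin n → ℝ := fun i => Sx i k
    set b : Fin n → ℝ := fun i => Sy i k
    have h := hpsd.dotProduct_mulVec_nonneg (Sum.elim a b)
    have h' : (0:ℝ) ≤ Sum.elim a b ⬝ᵥ
        (((2 / ε) • (Matrix.fromBlocks (1 : Matrix (Fin n) (Fin n) ℝ) (-1) (-1) 1)
            + lam • (1 : Matrix (Fin n ⊕ Fin n) (Fin n ⊕ Fin n) ℝ)
            - Matrix.fromBlocks X 0 0 (-Y)) *ᵥ Sum.elim a b) := by
      simpa using h
    have e1 : Sum.elim a b ⬝ᵥ (fromBlocks X 0 0 (-Y)) *ᵥ Sum.elim a b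
        = a ⬝ᵥ X *ᵥ a - b ⬝ᵥ Y *ᵥ b := by
      simp [fromBlocks_mulVec, sumElim_dotProduct_sumElim, Matrix.neg_mulVec,
        sub_eq_add_neg]
    have e2 : Sum.elim a b ⬝ᵥ (fromBlocks (1 : Matrix (Fin n) (Fin n) ℝ) (-1) (-1) 1) *ᵥ Sum.elim a b
        = (a - b) ⬝ᵥ (a - b) := by
      simp [fromBlocks_mulVec, sumElim_dotProduct_sumElim, Matrix.neg_mulVec,
        dotProduct_sub, sub_dotProduct]
      ring
    have e3 : Sum.elim a b ⬝ᵥ (1 : Matrix (Fin n ⊕ Fin n) (Fin n ⊕ Fin n) ℝ) *ᵥ Sum.elim a b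
        = a ⬝ᵥ a + b ⬝ᵥ b := by
      simp [sumElim_dotProduct_sumElim]
    rw [Matrix.sub_mulVec, Matrix.add_mulVec, Matrix.smul_mulVec, Matrix.smul_mulVec,
      dotProduct_sub, dotProduct_add, dotProduct_smul, dotProduct_smul] at h'
    rw [e1, e2, e3] at h'
    simp only [smul_eq_mul] at h'
    linarith
  -- sum over columns
  have trx : Matrix.trace (Sxᵀ * X * Sx) = ∑ k, (fun i => Sx i k) ⬝ᵥ X *ᵥ (fun i => Sx i k) :=
    trace_conj_eq_sum X Sx
  have try' : Matrix.trace (Syᵀ * Y * Sy) = ∑ k, (fun i => Sy i k) ⬝ᵥ Y *ᵥ (fun i => Sy i k) :=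
    trace_conj_eq_sum Y Sy
  have fdiff : frobNormSq (Sx - Sy)
      = ∑ k : Fin d, (((fun i => Sx i k) - (fun i => Sy i k)) ⬝ᵥ ((fun i => Sx i k) - (fun i => Sy i k))) := by
    rw [frobNormSq_eq_sum]
    congr 1; ext k
    simp [dotProduct, sq, Matrix.sub_apply]
  have fx : frobNormSq Sx = ∑ k : Fin d, ((fun i => Sx i k) ⬝ᵥ (fun i => Sx i k)) := by
    rw [frobNormSq_eq_sum]; congr 1; ext k; simp [dotProduct, sq]
  have fy : frobNormSq Sy = ∑ k : Fin d, ((fun i => Sy i k) ⬝ᵥ (fun i => Sy i k)) := by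
    rw [frobNormSq_eq_sum]; congr 1; ext k; simp [dotProduct, sq]
  have main : Matrix.trace (Sxᵀ * X * Sx) - Matrix.trace (Syᵀ * Y * Sy)
      ≤ (2/ε) * frobNormSq (Sx - Sy) + lam * (frobNormSq Sx + frobNormSq Sy) := by
    rw [trx, try', fdiff, fx, fy, ← Finset.sum_sub_distrib]
    have hs := Finset.sum_le_sum (fun k (_ : k ∈ Finset.univ) => key k)
    refine hs.trans (le_of_eq ?_)
    rw [Finset.sum_add_distrib, ← Finset.mul_sum, ← Finset.mul_sum, Finset.sum_add_distrib]
  -- bounds on Frobenius norms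
  have bdiff : frobNormSq (Sx - Sy) ≤ (C₁ * ‖x - y‖) ^ 2 :=
    frobNormSq_le _ _ (by positivity) (hlip t ht x y)
  have bx : frobNormSq Sx ≤ (C₁ * (1 + ‖x‖)) ^ 2 :=
    frobNormSq_le _ _ (by positivity) (hgrow t ht x)
  have by' : frobNormSq Sy ≤ (C₁ * (1 + ‖y‖)) ^ 2 :=
    frobNormSq_le _ _ (by positivity) (hgrow t ht y)
  have hεinv : 0 < 1/ε := by positivity
  have hFle : frobNormSq (Sx - Sy) ≤ C₁^2 * ‖x - y‖^2 := by
    calc frobNormSq (Sx - Sy) ≤ (C₁ * ‖x - y‖) ^ 2 := bdiff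
      _ = C₁^2 * ‖x - y‖^2 := by ring
  have step1 : (1/2) * (Matrix.trace (Sxᵀ * X * Sx) - Matrix.trace (Syᵀ * Y * Sy))
      ≤ (1/ε) * frobNormSq (Sx - Sy) + (lam/2) * (frobNormSq Sx + frobNormSq Sy) := by
    have h := mul_le_mul_of_nonneg_left main (by norm_num : (0:ℝ) ≤ 1/2)
    calc (1/2) * (Matrix.trace (Sxᵀ * X * Sx) - Matrix.trace (Syᵀ * Y * Sy))
        ≤ (1/2) * (2/ε * frobNormSq (Sx - Sy) + lam * (frobNormSq Sx + frobNormSq Sy)) := h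
      _ = (1/ε) * frobNormSq (Sx - Sy) + (lam/2) * (frobNormSq Sx + frobNormSq Sy) := by ring
  have step2 : (1/ε) * frobNormSq (Sx - Sy) ≤ (2 * C₁^2 / ε) * ‖x - y‖^2 := by
    have hA : (1/ε) * frobNormSq (Sx - Sy) ≤ (1/ε) * (C₁^2 * ‖x - y‖^2) :=
      mul_le_mul_of_nonneg_left hFle hεinv.le
    have hB : (1/ε) * (C₁^2 * ‖x - y‖^2) ≤ (1/ε) * (2 * C₁^2 * ‖x - y‖^2) := by
      apply mul_le_mul_of_nonneg_left _ hεinv.le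
      nlinarith [sq_nonneg C₁, sq_nonneg ‖x - y‖]
    calc (1/ε) * frobNormSq (Sx - Sy) ≤ (1/ε) * (2 * C₁^2 * ‖x - y‖^2) := hA.trans hB
      _ = (2 * C₁^2 / ε) * ‖x - y‖^2 := by ring
  have step3 : (lam/2) * (frobNormSq Sx + frobNormSq Sy)
      ≤ (2 * C₁^2) * lam * (1 + ‖x‖^2 + ‖y‖^2) := by
    have hb : frobNormSq Sx + frobNormSq Sy ≤ 4 * C₁^2 * (1 + ‖x‖^2 + ‖y‖^2) := by
      nlinarith [sq_nonneg (1 - ‖x‖), sq_nonneg (1 - ‖y‖), norm_nonneg x, norm_nonneg y]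
    calc (lam/2) * (frobNormSq Sx + frobNormSq Sy)
        ≤ (lam/2) * (4 * C₁^2 * (1 + ‖x‖^2 + ‖y‖^2)) :=
          mul_le_mul_of_nonneg_left hb (by linarith)
      _ = (2 * C₁^2) * lam * (1 + ‖x‖^2 + ‖y‖^2) := by ring
  calc (1/2) * (Matrix.trace (Sxᵀ * X * Sx) - Matrix.trace (Syᵀ * Y * Sy))
      ≤ (1/ε) * frobNormSq (Sx - Sy) + (lam/2) * (frobNormSq Sx + frobNormSq Sy) := step1
    _ ≤ (2 * C₁^2 / ε) * ‖x - y‖^2 + (2 * C₁^2) * lam * (1 + ‖x‖^2 + ‖y‖^2) :=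
        add_le_add step2 step3
end
end

section
/- Vanishing of the doubling penalty: in the doubling setting, assume in addition that U and V are continuous on I×B̄, and for each ε > 0 let (t_ε,x_ε,y_ε) be a maximum point of Φ_ε over I×B̄×B̄. Then |x_ε − y_ε| → 0 and (1/(2ε))|x_ε − y_ε|² → 0 as ε → 0⁺. -/
open Set Metric Filter Topology

noncomputable section

/-- The doubling-of-variables penalized function
`Φ_ε(t,x,y) = U(t,x) − V(t,y) − (1/(2ε))|x−y|² − θ(|x−x₀|⁴+|y−x₀|⁴) − β(t−t₀)²`. -/
def Phi {n : ℕ} (U V : ℝ → EuclideanSpace ℝ (Fin n) → ℝ)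
    (t₀ : ℝ) (x₀ : EuclideanSpace ℝ (Fin n)) (ε θ β : ℝ)
    (t : ℝ) (x y : EuclideanSpace ℝ (Fin n)) : ℝ :=
  U t x - V t y - (1 / (2 * ε)) * ‖x - y‖ ^ 2
    - θ * (‖x - x₀‖ ^ 4 + ‖y - x₀‖ ^ 4) - β * (t - t₀) ^ 2

lemma quart_diff_le {a b d R : ℝ} (ha : 0 ≤ a) (hb : 0 ≤ b) (ha2 : a ≤ 2*R)
    (hb2 : b ≤ 2*R) (hd : a - b ≤ d) (hd0 : 0 ≤ d) : a^4 - b^4 ≤ 32*R^3*d := by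
  have hR : 0 ≤ R := by linarith
  rcases le_or_gt a b with h | h
  · have h4 : a^4 ≤ b^4 := pow_le_pow_left₀ ha h 4
    have : 0 ≤ 32*R^3*d := by positivity
    linarith
  · have hab : 0 ≤ a - b := by linarith
    have hS : a^3 + a^2*b + a*b^2 + b^3 ≤ 32*R^3 := by
      nlinarith [pow_le_pow_left₀ ha ha2 3, pow_le_pow_left₀ hb hb2 3,
        mul_le_mul (mul_le_mul ha2 ha2 ha (by linarith)) hb2 hb (by positivity),
        mul_le_mul (mul_le_mul hb2 hb2 hb (by linarith)) ha2 ha (by positivity)]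
    have hS0 : 0 ≤ a^3 + a^2*b + a*b^2 + b^3 := by positivity
    have := mul_le_mul hd hS hS0 hd0
    nlinarith

/-- **Vanishing of the doubling penalty.** If `U, V` are continuous on the compact set
`I × B̄` and, for each `ε > 0`, `(t_ε, x_ε, y_ε)` maximizes `Φ_ε` over `I × B̄ × B̄`, then
`|x_ε − y_ε| → 0` and `(1/(2ε))|x_ε − y_ε|² → 0` as `ε → 0⁺`. -/
theorem doubling_penalty_vanishes {n : ℕ} (a bI : ℝ) (hab : a ≤ bI)
    (z : EuclideanSpace ℝ (Fin n)) (R : ℝ) (hR : 0 ≤ R)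
    (t₀ : ℝ) (x₀ : EuclideanSpace ℝ (Fin n))
    (ht₀ : t₀ ∈ Icc a bI) (hx₀ : x₀ ∈ closedBall z R)
    (θ β : ℝ) (hθ : 0 < θ) (hβ : 0 < β)
    (U V : ℝ → EuclideanSpace ℝ (Fin n) → ℝ)
    (hUbdd : ∃ M : ℝ, ∀ t ∈ Icc a bI, ∀ x ∈ closedBall z R, |U t x| ≤ M)
    (hVbdd : ∃ M : ℝ, ∀ t ∈ Icc a bI, ∀ x ∈ closedBall z R, |V t x| ≤ M)
    (hUcont : ContinuousOn (fun p : ℝ × EuclideanSpace ℝ (Fin n) => U p.1 p.2)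
      (Icc a bI ×ˢ closedBall z R))
    (hVcont : ContinuousOn (fun p : ℝ × EuclideanSpace ℝ (Fin n) => V p.1 p.2)
      (Icc a bI ×ˢ closedBall z R))
    (tsel : ℝ → ℝ) (xsel ysel : ℝ → EuclideanSpace ℝ (Fin n))
    (hsel : ∀ ε > (0 : ℝ), tsel ε ∈ Icc a bI ∧ xsel ε ∈ closedBall z R ∧
      ysel ε ∈ closedBall z R ∧
      ∀ t ∈ Icc a bI, ∀ x ∈ closedBall z R, ∀ y ∈ closedBall z R,
        Phi U V t₀ x₀ ε θ β t x y ≤ Phi U V t₀ x₀ ε θ β (tsel ε) (xsel ε) (ysel ε)) :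
    Tendsto (fun ε => ‖xsel ε - ysel ε‖) (𝓝[>] (0 : ℝ)) (𝓝 0) ∧
    Tendsto (fun ε => (1 / (2 * ε)) * ‖xsel ε - ysel ε‖ ^ 2) (𝓝[>] (0 : ℝ)) (𝓝 0) := by
  obtain ⟨Mv, hMv⟩ := hVbdd
  -- distance to x₀ is at most 2R for points of the ball
  have hnorm2R : ∀ x ∈ closedBall z R, ‖x - x₀‖ ≤ 2*R := by
    intro x hx
    rw [mem_closedBall] at hx hx₀
    have : dist x x₀ ≤ dist x z + dist x₀ z := dist_triangle_right x x₀ z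
    rw [← dist_eq_norm]
    linarith
  -- key inequality from maximality against (tsel ε, xsel ε, xsel ε)
  have key : ∀ ε > (0:ℝ), (1/(2*ε)) * ‖xsel ε - ysel ε‖^2 ≤
      V (tsel ε) (xsel ε) - V (tsel ε) (ysel ε)
      + θ * (‖xsel ε - x₀‖^4 - ‖ysel ε - x₀‖^4) := by
    intro ε hε
    obtain ⟨ht, hx, hy, hmax⟩ := hsel ε hε
    have := hmax (tsel ε) ht (xsel ε) hx (xsel ε) hx
    simp only [Phi, sub_self, norm_zero] at this
    nlinarith [this]
  have hMv0 : 0 ≤ Mv := le_trans (abs_nonneg _) (hMv t₀ ht₀ x₀ hx₀)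
  set C : ℝ := 2*Mv + θ*(2*R)^4 with hCdef
  have hC0 : 0 ≤ C := by positivity
  -- quadratic bound
  have hsq : ∀ ε > (0:ℝ), ‖xsel ε - ysel ε‖^2 ≤ 2*ε*C := by
    intro ε hε
    obtain ⟨ht, hx, hy, _⟩ := hsel ε hε
    have h1 := key ε hε
    have hVx := abs_le.mp (hMv (tsel ε) ht (xsel ε) hx)
    have hVy := abs_le.mp (hMv (tsel ε) ht (ysel ε) hy)
    have hx4 : ‖xsel ε - x₀‖^4 ≤ (2*R)^4 :=
      pow_le_pow_left₀ (norm_nonneg _) (hnorm2R _ hx) 4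
    have hy4 : 0 ≤ ‖ysel ε - x₀‖^4 := by positivity
    have hle : (1/(2*ε)) * ‖xsel ε - ysel ε‖^2 ≤ C := by
      have := mul_le_mul_of_nonneg_left (sub_le_self (‖xsel ε - x₀‖^4) hy4 :
        ‖xsel ε - x₀‖^4 - ‖ysel ε - x₀‖^4 ≤ ‖xsel ε - x₀‖^4) hθ.le
      nlinarith [mul_le_mul_of_nonneg_left hx4 hθ.le]
    have h2ε : (0:ℝ) < 2*ε := by linarith
    have := mul_le_mul_of_nonneg_left hle h2ε.le
    have heq : 2*ε * ((1/(2*ε)) * ‖xsel ε - ysel ε‖^2) = ‖xsel ε - ysel ε‖^2 := by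
      field_simp
    linarith [heq ▸ this]
  -- first limit
  have h1 : Tendsto (fun ε => ‖xsel ε - ysel ε‖) (𝓝[>] (0:ℝ)) (𝓝 0) := by
    apply squeeze_zero' (Eventually.of_forall fun ε => norm_nonneg _)
    · filter_upwards [self_mem_nhdsWithin] with ε (hε : 0 < ε)
      calc ‖xsel ε - ysel ε‖ = Real.sqrt (‖xsel ε - ysel ε‖^2) := by
            rw [Real.sqrt_sq (norm_nonneg _)]
        _ ≤ Real.sqrt (2*ε*C) := Real.sqrt_le_sqrt (hsq ε hε)
        _ = Real.sqrt (2*C*ε) := by ring_nf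
    · have hcont : Continuous (fun ε : ℝ => Real.sqrt (2*C*ε)) := by continuity
      have := hcont.tendsto 0
      simp only [mul_zero, Real.sqrt_zero] at this
      exact this.mono_left nhdsWithin_le_nhds
  refine ⟨h1, ?_⟩
  -- the |V(t,x) - V(t,y)| term tends to 0 by uniform continuity
  have hcomp : IsCompact (Icc a bI ×ˢ closedBall z R) :=
    isCompact_Icc.prod (isCompact_closedBall z R)
  have hUC := hcomp.uniformContinuousOn_of_continuous hVcont
  rw [Metric.uniformContinuousOn_iff] at hUC
  have hq : Tendsto (fun ε => |V (tsel ε) (xsel ε) - V (tsel ε) (ysel ε)|)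
      (𝓝[>] (0:ℝ)) (𝓝 0) := by
    rw [Metric.tendsto_nhds]
    intro δ hδ
    obtain ⟨δ', hδ', himp⟩ := hUC δ hδ
    have hev := (Metric.tendsto_nhds.mp h1) δ' hδ'
    filter_upwards [self_mem_nhdsWithin, hev] with ε (hε : 0 < ε) hd
    obtain ⟨ht, hx, hy, _⟩ := hsel ε hε
    have hdist : dist ((tsel ε, xsel ε) : ℝ × EuclideanSpace ℝ (Fin n))
        (tsel ε, ysel ε) < δ' := by
      rw [Prod.dist_eq]
      simp only [dist_self]
      rw [Real.dist_eq, sub_zero, abs_norm] at hd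
      rw [dist_eq_norm]
      simpa using hd
    have := himp (tsel ε, xsel ε) (mk_mem_prod ht hx) (tsel ε, ysel ε)
      (mk_mem_prod ht hy) hdist
    rw [Real.dist_eq] at this ⊢
    rw [sub_zero, abs_abs]
    exact this
  -- squeeze for the penalty term
  have hlow : ∀ᶠ ε in 𝓝[>] (0:ℝ), 0 ≤ (1/(2*ε)) * ‖xsel ε - ysel ε‖^2 := by
    filter_upwards [self_mem_nhdsWithin] with ε (hε : 0 < ε)
    positivity
  have hub : ∀ᶠ ε in 𝓝[>] (0:ℝ), (1/(2*ε)) * ‖xsel ε - ysel ε‖^2 ≤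
      |V (tsel ε) (xsel ε) - V (tsel ε) (ysel ε)| + θ * (32*R^3*‖xsel ε - ysel ε‖) := by
    filter_upwards [self_mem_nhdsWithin] with ε (hε : 0 < ε)
    obtain ⟨ht, hx, hy, _⟩ := hsel ε hε
    have h1' := key ε hε
    have hVd : V (tsel ε) (xsel ε) - V (tsel ε) (ysel ε) ≤
        |V (tsel ε) (xsel ε) - V (tsel ε) (ysel ε)| := le_abs_self _
    have hquart : ‖xsel ε - x₀‖^4 - ‖ysel ε - x₀‖^4 ≤ 32*R^3*‖xsel ε - ysel ε‖ := by
      apply quart_diff_le (norm_nonneg _) (norm_nonneg _) (hnorm2R _ hx) (hnorm2R _ hy)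
        _ (norm_nonneg _)
      calc ‖xsel ε - x₀‖ - ‖ysel ε - x₀‖ ≤ ‖(xsel ε - x₀) - (ysel ε - x₀)‖ :=
            (abs_le.mp (abs_norm_sub_norm_le _ _)).2
        _ = ‖xsel ε - ysel ε‖ := by rw [sub_sub_sub_cancel_right]
    have := mul_le_mul_of_nonneg_left hquart hθ.le
    linarith
  have hg : Tendsto (fun ε => |V (tsel ε) (xsel ε) - V (tsel ε) (ysel ε)|
      + θ * (32*R^3*‖xsel ε - ysel ε‖)) (𝓝[>] (0:ℝ)) (𝓝 (0 + θ * (32*R^3*0))) :=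
    hq.add (tendsto_const_nhds.mul (tendsto_const_nhds.mul h1))
  simp only [mul_zero, add_zero] at hg
  exact squeeze_zero' hlow hub hg
end
end

section
/- Convergence of doubling maximizers: in the doubling setting, assume U and V are continuous on I×B̄ and that (t₀,x₀) is a maximum point of (t,x) ↦ U(t,x) − V(t,x) over I×B̄. For each ε > 0 let (t_ε,x_ε,y_ε) be a maximum point of Φ_ε over I×B̄×B̄. Then for every ε > 0: U(t₀,x₀) − V(t₀,x₀) ≤ Φ_ε(t_ε,x_ε,y_ε) ≤ U(t_ε,x_ε) − V(t_ε,y_ε); and as ε → 0⁺: (t_ε,x_ε,y_ε) → (t₀,x₀,x₀), θ(|x_ε−x₀|⁴ + |y_ε−x₀|⁴) → 0, and U(t_ε,x_ε) − V(t_ε,y_ε) → U(t₀,x₀) − V(t₀,x₀). -/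
open Set Metric Filter Topology

noncomputable section

/-- If `f ≥ 0` and `f² → 0`, then `f → 0`. -/
lemma aux_sq_tendsto {α : Type*} {l : Filter α} {f : α → ℝ} (h0 : ∀ x, 0 ≤ f x)
    (h : Tendsto (fun x => f x ^ 2) l (𝓝 0)) : Tendsto f l (𝓝 0) := by
  have h' := (Real.continuous_sqrt.tendsto 0).comp h
  simp only [Real.sqrt_zero] at h'
  refine h'.congr fun x => ?_
  show Real.sqrt (f x ^ 2) = f x
  rw [Real.sqrt_sq (h0 x)]

/-- If `f ≥ 0` and `f⁴ → 0`, then `f → 0`. -/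
lemma aux_pow4_tendsto {α : Type*} {l : Filter α} {f : α → ℝ} (h0 : ∀ x, 0 ≤ f x)
    (h : Tendsto (fun x => f x ^ 4) l (𝓝 0)) : Tendsto f l (𝓝 0) := by
  refine aux_sq_tendsto h0 ?_
  refine aux_sq_tendsto (fun x => sq_nonneg _) ?_
  refine h.congr fun x => ?_
  ring

/-- **Convergence of doubling maximizers.** If `U, V` are continuous on `I × B̄`, `(t₀,x₀)`
maximizes `U − V` over `I × B̄`, and for each `ε > 0` the point `(t_ε, x_ε, y_ε)` maximizes
`Φ_ε` over `I × B̄ × B̄`, then `U(t₀,x₀) − V(t₀,x₀) ≤ Φ_ε(t_ε,x_ε,y_ε) ≤ U(t_ε,x_ε) − V(t_ε,y_ε)`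
for every `ε > 0`, and, as `ε → 0⁺`, `(t_ε,x_ε,y_ε) → (t₀,x₀,x₀)`,
`θ(|x_ε−x₀|⁴ + |y_ε−x₀|⁴) → 0` and `U(t_ε,x_ε) − V(t_ε,y_ε) → U(t₀,x₀) − V(t₀,x₀)`. -/
theorem doubling_maximizers_converge {n : ℕ} (a bI : ℝ) (hab : a ≤ bI)
    (z : EuclideanSpace ℝ (Fin n)) (R : ℝ) (hR : 0 ≤ R)
    (t₀ : ℝ) (x₀ : EuclideanSpace ℝ (Fin n))
    (ht₀ : t₀ ∈ Icc a bI) (hx₀ : x₀ ∈ closedBall z R)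
    (θ β : ℝ) (hθ : 0 < θ) (hβ : 0 < β)
    (U V : ℝ → EuclideanSpace ℝ (Fin n) → ℝ)
    (hUbdd : ∃ M : ℝ, ∀ t ∈ Icc a bI, ∀ x ∈ closedBall z R, |U t x| ≤ M)
    (hVbdd : ∃ M : ℝ, ∀ t ∈ Icc a bI, ∀ x ∈ closedBall z R, |V t x| ≤ M)
    (hUcont : ContinuousOn (fun p : ℝ × EuclideanSpace ℝ (Fin n) => U p.1 p.2)
      (Icc a bI ×ˢ closedBall z R))
    (hVcont : ContinuousOn (fun p : ℝ × EuclideanSpace ℝ (Fin n) => V p.1 p.2)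
      (Icc a bI ×ˢ closedBall z R))
    (hmax₀ : ∀ t ∈ Icc a bI, ∀ x ∈ closedBall z R, U t x - V t x ≤ U t₀ x₀ - V t₀ x₀)
    (tsel : ℝ → ℝ) (xsel ysel : ℝ → EuclideanSpace ℝ (Fin n))
    (hsel : ∀ ε > (0 : ℝ), tsel ε ∈ Icc a bI ∧ xsel ε ∈ closedBall z R ∧
      ysel ε ∈ closedBall z R ∧
      ∀ t ∈ Icc a bI, ∀ x ∈ closedBall z R, ∀ y ∈ closedBall z R,
        Phi U V t₀ x₀ ε θ β t x y ≤ Phi U V t₀ x₀ ε θ β (tsel ε) (xsel ε) (ysel ε)) :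
    (∀ ε > (0 : ℝ),
      U t₀ x₀ - V t₀ x₀ ≤ Phi U V t₀ x₀ ε θ β (tsel ε) (xsel ε) (ysel ε) ∧
      Phi U V t₀ x₀ ε θ β (tsel ε) (xsel ε) (ysel ε) ≤ U (tsel ε) (xsel ε) - V (tsel ε) (ysel ε)) ∧
    Tendsto (fun ε => (tsel ε, xsel ε, ysel ε)) (𝓝[>] (0 : ℝ)) (𝓝 (t₀, x₀, x₀)) ∧
    Tendsto (fun ε => θ * (‖xsel ε - x₀‖ ^ 4 + ‖ysel ε - x₀‖ ^ 4)) (𝓝[>] (0 : ℝ)) (𝓝 0) ∧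
    Tendsto (fun ε => U (tsel ε) (xsel ε) - V (tsel ε) (ysel ε)) (𝓝[>] (0 : ℝ))
      (𝓝 (U t₀ x₀ - V t₀ x₀)) := by
  obtain ⟨MU, hMU⟩ := hUbdd
  obtain ⟨MV, hMV⟩ := hVbdd
  set m : ℝ := U t₀ x₀ - V t₀ x₀ with hm
  -- Part 1, lower bound
  have hPhi₀ : ∀ ε : ℝ, Phi U V t₀ x₀ ε θ β t₀ x₀ x₀ = m := by
    intro ε; simp [Phi, hm]
  have hlow : ∀ ε > (0 : ℝ), m ≤ Phi U V t₀ x₀ ε θ β (tsel ε) (xsel ε) (ysel ε) := by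
    intro ε hε
    have h := (hsel ε hε).2.2.2 t₀ ht₀ x₀ hx₀ x₀ hx₀
    rw [hPhi₀ ε] at h
    exact h
  -- Part 1, upper bound (and the penalty estimate)
  have hpen : ∀ ε > (0 : ℝ),
      (1 / (2 * ε)) * ‖xsel ε - ysel ε‖ ^ 2
        + θ * (‖xsel ε - x₀‖ ^ 4 + ‖ysel ε - x₀‖ ^ 4) + β * (tsel ε - t₀) ^ 2
        ≤ U (tsel ε) (xsel ε) - V (tsel ε) (ysel ε) - m := by
    intro ε hε
    have h := hlow ε hε
    simp only [Phi] at h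
    linarith
  have hpen_nonneg : ∀ ε > (0 : ℝ),
      0 ≤ (1 / (2 * ε)) * ‖xsel ε - ysel ε‖ ^ 2 ∧
      0 ≤ θ * (‖xsel ε - x₀‖ ^ 4 + ‖ysel ε - x₀‖ ^ 4) ∧
      0 ≤ β * (tsel ε - t₀) ^ 2 := by
    intro ε hε
    refine ⟨?_, ?_, ?_⟩ <;> positivity
  have hpart1 : ∀ ε > (0 : ℝ),
      m ≤ Phi U V t₀ x₀ ε θ β (tsel ε) (xsel ε) (ysel ε) ∧
      Phi U V t₀ x₀ ε θ β (tsel ε) (xsel ε) (ysel ε)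
        ≤ U (tsel ε) (xsel ε) - V (tsel ε) (ysel ε) := by
    intro ε hε
    obtain ⟨h1, h2, h3⟩ := hpen_nonneg ε hε
    refine ⟨hlow ε hε, ?_⟩
    simp only [Phi]
    linarith
  -- uniform bound on U - V - m
  have habsm : |m| ≤ MU + MV := by
    have h1 := hMU t₀ ht₀ x₀ hx₀
    have h2 := hMV t₀ ht₀ x₀ hx₀
    rw [hm]
    calc |U t₀ x₀ - V t₀ x₀| ≤ |U t₀ x₀| + |V t₀ x₀| := abs_sub _ _
      _ ≤ MU + MV := add_le_add h1 h2
  set C : ℝ := 2 * (MU + MV) with hC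
  have hCbound : ∀ ε > (0 : ℝ),
      U (tsel ε) (xsel ε) - V (tsel ε) (ysel ε) - m ≤ C := by
    intro ε hε
    obtain ⟨htm, hxm, hym, -⟩ := hsel ε hε
    have h1 := (abs_le.mp (hMU (tsel ε) htm (xsel ε) hxm)).2
    have h2 := (abs_le.mp (hMV (tsel ε) htm (ysel ε) hym)).1
    have h3 := (abs_le.mp habsm).1
    rw [hC]; linarith
  -- ‖x_ε - y_ε‖ → 0
  have hxy2 : ∀ ε > (0 : ℝ), ‖xsel ε - ysel ε‖ ^ 2 ≤ 2 * C * ε := by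
    intro ε hε
    obtain ⟨h1, h2, h3⟩ := hpen_nonneg ε hε
    have h4 := hpen ε hε
    have h5 := hCbound ε hε
    have h6 : (1 / (2 * ε)) * ‖xsel ε - ysel ε‖ ^ 2 ≤ C := by linarith
    have h7 : 0 < 2 * ε := by linarith
    calc ‖xsel ε - ysel ε‖ ^ 2 = (2 * ε) * ((1 / (2 * ε)) * ‖xsel ε - ysel ε‖ ^ 2) := by
          field_simp
      _ ≤ (2 * ε) * C := by exact mul_le_mul_of_nonneg_left h6 (le_of_lt h7)
      _ = 2 * C * ε := by ring
  have hxy_sq : Tendsto (fun ε => ‖xsel ε - ysel ε‖ ^ 2) (𝓝[>] (0 : ℝ)) (𝓝 0) := by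
    have hg : Tendsto (fun ε : ℝ => 2 * C * ε) (𝓝[>] (0 : ℝ)) (𝓝 0) := by
      have : Tendsto (fun ε : ℝ => 2 * C * ε) (𝓝 (0 : ℝ)) (𝓝 (2 * C * 0)) :=
        (continuous_const.mul continuous_id).tendsto 0
      simpa using this.mono_left nhdsWithin_le_nhds
    refine squeeze_zero' ?_ ?_ hg
    · filter_upwards [self_mem_nhdsWithin] with ε hε
      positivity
    · filter_upwards [self_mem_nhdsWithin] with ε hε
      exact hxy2 ε hε
  have hxy : Tendsto (fun ε => ‖xsel ε - ysel ε‖) (𝓝[>] (0 : ℝ)) (𝓝 0) :=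
    aux_sq_tendsto (fun ε => norm_nonneg _) hxy_sq
  -- uniform continuity of V on the compact K
  set K := Icc a bI ×ˢ closedBall z R with hK
  have hKcomp : IsCompact K := (isCompact_Icc).prod (isCompact_closedBall z R)
  have hVuc : UniformContinuousOn (fun p : ℝ × EuclideanSpace ℝ (Fin n) => V p.1 p.2) K :=
    hKcomp.uniformContinuousOn_of_continuous hVcont
  -- the penalty P_ε := θ(...) + β(t-t₀)² tends to 0
  have hP : Tendsto
      (fun ε => θ * (‖xsel ε - x₀‖ ^ 4 + ‖ysel ε - x₀‖ ^ 4) + β * (tsel ε - t₀) ^ 2)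
      (𝓝[>] (0 : ℝ)) (𝓝 0) := by
    rw [NormedAddCommGroup.tendsto_nhds_zero]
    intro η hη
    obtain ⟨δ, hδ, hδ'⟩ := (Metric.uniformContinuousOn_iff).mp hVuc η hη
    have hev : ∀ᶠ ε in 𝓝[>] (0 : ℝ), ‖xsel ε - ysel ε‖ < δ :=
      hxy.eventually_lt_const hδ
    filter_upwards [self_mem_nhdsWithin, hev] with ε hε hεδ
    obtain ⟨htm, hxm, hym, -⟩ := hsel ε hε
    have hVd : dist (V (tsel ε) (xsel ε)) (V (tsel ε) (ysel ε)) < η := by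
      have hd : dist ((tsel ε, xsel ε) : ℝ × EuclideanSpace ℝ (Fin n)) (tsel ε, ysel ε) < δ := by
        rw [Prod.dist_eq]
        simp only [dist_self]
        rw [dist_eq_norm]
        simpa using hεδ
      exact hδ' (tsel ε, xsel ε) ⟨htm, hxm⟩ (tsel ε, ysel ε) ⟨htm, hym⟩ hd
    rw [Real.dist_eq] at hVd
    have hVd' := (abs_lt.mp hVd).2
    have hmax := hmax₀ (tsel ε) htm (xsel ε) hxm
    obtain ⟨h1, h2, h3⟩ := hpen_nonneg ε hε
    have h4 := hpen ε hε
    rw [Real.norm_eq_abs, abs_of_nonneg (by linarith)]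
    linarith
  -- individual penalty terms → 0
  have hθterm : Tendsto (fun ε => θ * (‖xsel ε - x₀‖ ^ 4 + ‖ysel ε - x₀‖ ^ 4))
      (𝓝[>] (0 : ℝ)) (𝓝 0) := by
    refine squeeze_zero' ?_ ?_ hP
    · filter_upwards [self_mem_nhdsWithin] with ε hε
      exact (hpen_nonneg ε hε).2.1
    · filter_upwards [self_mem_nhdsWithin] with ε hε
      have := (hpen_nonneg ε hε).2.2
      linarith
  have hβterm : Tendsto (fun ε => β * (tsel ε - t₀) ^ 2) (𝓝[>] (0 : ℝ)) (𝓝 0) := by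
    refine squeeze_zero' ?_ ?_ hP
    · filter_upwards [self_mem_nhdsWithin] with ε hε
      exact (hpen_nonneg ε hε).2.2
    · filter_upwards [self_mem_nhdsWithin] with ε hε
      have := (hpen_nonneg ε hε).2.1
      linarith
  -- t_ε → t₀
  have ht2 : Tendsto (fun ε => (tsel ε - t₀) ^ 2) (𝓝[>] (0 : ℝ)) (𝓝 0) := by
    have := hβterm.const_mul (1 / β)
    rw [mul_zero] at this
    refine this.congr fun ε => ?_
    field_simp
  have htt : Tendsto tsel (𝓝[>] (0 : ℝ)) (𝓝 t₀) := by
    rw [tendsto_iff_dist_tendsto_zero]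
    have habs : Tendsto (fun ε => |tsel ε - t₀|) (𝓝[>] (0 : ℝ)) (𝓝 0) := by
      refine aux_sq_tendsto (fun ε => abs_nonneg _) ?_
      refine ht2.congr fun ε => ?_
      rw [sq_abs]
    refine habs.congr fun ε => ?_
    rw [Real.dist_eq]
  -- x_ε → x₀ and y_ε → x₀
  have hx4 : Tendsto (fun ε => ‖xsel ε - x₀‖ ^ 4) (𝓝[>] (0 : ℝ)) (𝓝 0) := by
    have hθ' := hθterm.const_mul (1 / θ)
    rw [mul_zero] at hθ'
    refine squeeze_zero' ?_ ?_ hθ'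
    · filter_upwards with ε; positivity
    · filter_upwards with ε
      have h4 : 0 ≤ ‖ysel ε - x₀‖ ^ 4 := by positivity
      rw [div_mul_eq_mul_div, one_mul, le_div_iff₀ hθ, mul_comm]
      nlinarith
  have hy4 : Tendsto (fun ε => ‖ysel ε - x₀‖ ^ 4) (𝓝[>] (0 : ℝ)) (𝓝 0) := by
    have hθ' := hθterm.const_mul (1 / θ)
    rw [mul_zero] at hθ'
    refine squeeze_zero' ?_ ?_ hθ'
    · filter_upwards with ε; positivity
    · filter_upwards with ε
      have h4 : 0 ≤ ‖xsel ε - x₀‖ ^ 4 := by positivity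
      rw [div_mul_eq_mul_div, one_mul, le_div_iff₀ hθ, mul_comm]
      nlinarith
  have hxx : Tendsto xsel (𝓝[>] (0 : ℝ)) (𝓝 x₀) := by
    rw [tendsto_iff_dist_tendsto_zero]
    have := aux_pow4_tendsto (f := fun ε => ‖xsel ε - x₀‖) (fun ε => norm_nonneg _) hx4
    refine this.congr fun ε => ?_
    rw [dist_eq_norm]
  have hyy : Tendsto ysel (𝓝[>] (0 : ℝ)) (𝓝 x₀) := by
    rw [tendsto_iff_dist_tendsto_zero]
    have := aux_pow4_tendsto (f := fun ε => ‖ysel ε - x₀‖) (fun ε => norm_nonneg _) hy4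
    refine this.congr fun ε => ?_
    rw [dist_eq_norm]
  -- convergence of U,V values
  have hmemU : ∀ᶠ ε in 𝓝[>] (0 : ℝ), ((tsel ε, xsel ε) : ℝ × EuclideanSpace ℝ (Fin n)) ∈ K := by
    filter_upwards [self_mem_nhdsWithin] with ε hε
    exact ⟨(hsel ε hε).1, (hsel ε hε).2.1⟩
  have hmemV : ∀ᶠ ε in 𝓝[>] (0 : ℝ), ((tsel ε, ysel ε) : ℝ × EuclideanSpace ℝ (Fin n)) ∈ K := by
    filter_upwards [self_mem_nhdsWithin] with ε hε
    exact ⟨(hsel ε hε).1, (hsel ε hε).2.2.1⟩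
  have hpairU : Tendsto (fun ε => ((tsel ε, xsel ε) : ℝ × EuclideanSpace ℝ (Fin n)))
      (𝓝[>] (0 : ℝ)) (𝓝[K] (t₀, x₀)) :=
    tendsto_nhdsWithin_iff.mpr ⟨htt.prodMk_nhds hxx, hmemU⟩
  have hpairV : Tendsto (fun ε => ((tsel ε, ysel ε) : ℝ × EuclideanSpace ℝ (Fin n)))
      (𝓝[>] (0 : ℝ)) (𝓝[K] (t₀, x₀)) :=
    tendsto_nhdsWithin_iff.mpr ⟨htt.prodMk_nhds hyy, hmemV⟩
  have hUlim : Tendsto (fun ε => U (tsel ε) (xsel ε)) (𝓝[>] (0 : ℝ)) (𝓝 (U t₀ x₀)) :=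
    ((hUcont (t₀, x₀) ⟨ht₀, hx₀⟩).tendsto).comp hpairU
  have hVlim : Tendsto (fun ε => V (tsel ε) (ysel ε)) (𝓝[>] (0 : ℝ)) (𝓝 (V t₀ x₀)) :=
    ((hVcont (t₀, x₀) ⟨ht₀, hx₀⟩).tendsto).comp hpairV
  exact ⟨hpart1, htt.prodMk_nhds (hxx.prodMk_nhds hyy), hθterm, hUlim.sub hVlim⟩
end
end

section
/- The maximizing time stays away from the terminal time (Step 2 of the uniqueness proof): in the doubling setting with I = [a,T] for some 0 ≤ a < T, assume in addition that U(T,x) = V(T,x) = G(x) for all x ∈ B̄, where G : B̄ → ℝ is continuous, that t₀ < T, and that U(t₀,x₀) − V(t₀,x₀) = η > 0. Then there exists ε₀ > 0 such that for every 0 < ε < ε₀, every maximum point (t_ε,x_ε,y_ε) of Φ_ε over I×B̄×B̄ satisfies t_ε < T. -/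
open Set Metric

noncomputable section

/-- **The maximizing time stays away from the terminal time (Step 2 of the uniqueness proof).**
In the doubling setting on `I = [a,T]`, if `U(T,·) = V(T,·) = G` with `G` continuous on `B̄`,
`t₀ < T` and `U(t₀,x₀) − V(t₀,x₀) = η > 0`, then there exists `ε₀ > 0` such that for every
`0 < ε < ε₀` any maximum point `(t_ε, x_ε, y_ε)` of `Φ_ε` over `I × B̄ × B̄` has `t_ε < T`. -/
theorem doubling_maximizer_time_lt_terminal {n : ℕ} (a T : ℝ) (ha : 0 ≤ a) (haT : a < T)
    (z : EuclideanSpace ℝ (Fin n)) (R : ℝ) (hR : 0 ≤ R)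
    (t₀ : ℝ) (x₀ : EuclideanSpace ℝ (Fin n))
    (ht₀ : t₀ ∈ Icc a T) (hx₀ : x₀ ∈ closedBall z R) (ht₀T : t₀ < T)
    (θ β : ℝ) (hθ : 0 < θ) (hβ : 0 < β)
    (U V : ℝ → EuclideanSpace ℝ (Fin n) → ℝ)
    (hUbdd : ∃ M : ℝ, ∀ t ∈ Icc a T, ∀ x ∈ closedBall z R, |U t x| ≤ M)
    (hVbdd : ∃ M : ℝ, ∀ t ∈ Icc a T, ∀ x ∈ closedBall z R, |V t x| ≤ M)
    (G : EuclideanSpace ℝ (Fin n) → ℝ) (hG : ContinuousOn G (closedBall z R))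
    (hUT : ∀ x ∈ closedBall z R, U T x = G x)
    (hVT : ∀ x ∈ closedBall z R, V T x = G x)
    (η : ℝ) (hη : 0 < η) (hη' : U t₀ x₀ - V t₀ x₀ = η) :
    ∃ ε₀ > (0 : ℝ), ∀ ε : ℝ, 0 < ε → ε < ε₀ →
      ∀ tε : ℝ, ∀ xε yε : EuclideanSpace ℝ (Fin n),
        tε ∈ Icc a T → xε ∈ closedBall z R → yε ∈ closedBall z R →
        (∀ t ∈ Icc a T, ∀ x ∈ closedBall z R, ∀ y ∈ closedBall z R,
          Phi U V t₀ x₀ ε θ β t x y ≤ Phi U V t₀ x₀ ε θ β tε xε yε) →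
        tε < T := by
  obtain ⟨MG, hMG⟩ := (isCompact_closedBall z R).exists_bound_of_continuousOn hG
  have hMG0 : 0 ≤ MG := le_trans (norm_nonneg _) (hMG x₀ hx₀)
  obtain ⟨δ, hδ, hδG⟩ := Metric.uniformContinuousOn_iff.mp
    ((isCompact_closedBall z R).uniformContinuousOn_of_continuous hG) η hη
  refine ⟨δ ^ 2 / (4 * MG + 1), by positivity, ?_⟩
  intro ε hε hεε₀ tε xε yε htε hxε hyε hmax
  by_contra hT
  have htεT : tε = T := le_antisymm htε.2 (not_lt.mp hT)
  subst htεT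
  have hΦ0 : Phi U V t₀ x₀ ε θ β t₀ x₀ x₀ = η := by
    simp [Phi, hη']
  have key := hmax t₀ ht₀ x₀ hx₀ x₀ hx₀
  rw [hΦ0] at key
  unfold Phi at key
  rw [hUT xε hxε, hVT yε hyε] at key
  have hpen : 0 ≤ θ * (‖xε - x₀‖ ^ 4 + ‖yε - x₀‖ ^ 4) := by positivity
  have hβpen : 0 ≤ β * (tε - t₀) ^ 2 := by positivity
  have hsq : 0 ≤ (1 / (2 * ε)) * ‖xε - yε‖ ^ 2 := by positivity
  have h1 : (1 / (2 * ε)) * ‖xε - yε‖ ^ 2 ≤ G xε - G yε - η := by linarith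
  have hGx' := abs_le.mp (by simpa [Real.norm_eq_abs] using hMG xε hxε : |G xε| ≤ MG)
  have hGy' := abs_le.mp (by simpa [Real.norm_eq_abs] using hMG yε hyε : |G yε| ≤ MG)
  have hε' : ε * (4 * MG + 1) < δ ^ 2 := by
    rw [lt_div_iff₀ (by positivity)] at hεε₀
    linarith
  have h2 : ‖xε - yε‖ ^ 2 < δ ^ 2 := by
    have h3 : ‖xε - yε‖ ^ 2 ≤ 2 * ε * (G xε - G yε - η) := by
      have hm := mul_le_mul_of_nonneg_left h1 (by positivity : (0:ℝ) ≤ 2 * ε)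
      calc ‖xε - yε‖ ^ 2 = 2 * ε * ((1 / (2 * ε)) * ‖xε - yε‖ ^ 2) := by field_simp
        _ ≤ _ := hm
    nlinarith
  have hnorm : ‖xε - yε‖ < δ := lt_of_pow_lt_pow_left₀ 2 hδ.le h2
  have hd := hδG xε hxε yε hyε (by rwa [dist_eq_norm])
  rw [Real.dist_eq] at hd
  have := abs_lt.mp hd
  linarith
end
end
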